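/- Fix R₀ ≥ 100 and define ρ : ℝ → ℝ by ρ(x) = (3/(8R₀⁵))·x⁴ − (5/(4R₀³))·x² + 15/(8R₀) for |x| ≤ R₀, and ρ(x) = 1/|x| for |x| ≥ R₀ (a positive C² function). Then for every x ∈ ℝ, both −ρ″(x)/ρ(x) ≥ −2/R₀² and (1 − ρ′(x)²)/ρ(x)² ≥ −2/R₀². -/

import Mathlib

/-- The glued warping function: the quartic
`(3/(8R₀⁵))x⁴ − (5/(4R₀³))x² + 15/(8R₀)` for `|x| ≤ R₀`, and `1/|x|` for `|x| ≥ R₀`. -/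
noncomputable def rho (R₀ : ℝ) : ℝ → ℝ := fun x =>
  if |x| ≤ R₀ then 3 / (8 * R₀ ^ 5) * x ^ 4 - 5 / (4 * R₀ ^ 3) * x ^ 2 + 15 / (8 * R₀)
  else 1 / |x|

noncomputable def rhoD (R : ℝ) : ℝ → ℝ := fun x =>
  if |x| ≤ R then 3 / (2 * R ^ 5) * x ^ 3 - 5 / (2 * R ^ 3) * x else -x / |x| ^ 3

noncomputable def rhoDD (R : ℝ) : ℝ → ℝ := fun x =>
  if |x| ≤ R then 9 / (2 * R ^ 5) * x ^ 2 - 5 / (2 * R ^ 3) else 2 / |x| ^ 3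

lemma rho_of_le {R x : ℝ} (h : |x| ≤ R) :
    rho R x = 3 / (8 * R ^ 5) * x ^ 4 - 5 / (4 * R ^ 3) * x ^ 2 + 15 / (8 * R) := if_pos h

lemma rho_of_not {R x : ℝ} (h : ¬ |x| ≤ R) : rho R x = 1 / |x| := if_neg h

lemma rhoD_of_le {R x : ℝ} (h : |x| ≤ R) :
    rhoD R x = 3 / (2 * R ^ 5) * x ^ 3 - 5 / (2 * R ^ 3) * x := if_pos h

lemma rhoD_of_not {R x : ℝ} (h : ¬ |x| ≤ R) : rhoD R x = -x / |x| ^ 3 := if_neg h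

lemma rhoDD_of_le {R x : ℝ} (h : |x| ≤ R) :
    rhoDD R x = 9 / (2 * R ^ 5) * x ^ 2 - 5 / (2 * R ^ 3) := if_pos h

lemma rhoDD_of_not {R x : ℝ} (h : ¬ |x| ≤ R) : rhoDD R x = 2 / |x| ^ 3 := if_neg h

lemma hasDerivAt_quartic (R x : ℝ) :
    HasDerivAt (fun y => 3 / (8 * R ^ 5) * y ^ 4 - 5 / (4 * R ^ 3) * y ^ 2 + 15 / (8 * R))
      (3 / (2 * R ^ 5) * x ^ 3 - 5 / (2 * R ^ 3) * x) x := by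
  have h := (((hasDerivAt_pow 4 x).const_mul (3 / (8 * R ^ 5))).sub
      ((hasDerivAt_pow 2 x).const_mul (5 / (4 * R ^ 3)))).add_const (15 / (8 * R))
  refine h.congr_deriv ?_
  push_cast; ring

lemma hasDerivAt_cubic (R x : ℝ) :
    HasDerivAt (fun y => 3 / (2 * R ^ 5) * y ^ 3 - 5 / (2 * R ^ 3) * y)
      (9 / (2 * R ^ 5) * x ^ 2 - 5 / (2 * R ^ 3)) x := by
  have h := ((hasDerivAt_pow 3 x).const_mul (3 / (2 * R ^ 5))).sub
      ((hasDerivAt_id x).const_mul (5 / (2 * R ^ 3)))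
  refine h.congr_deriv ?_
  push_cast; ring

lemma hasDerivAt_rho (R : ℝ) (hR : 0 < R) (x : ℝ) :
    HasDerivAt (rho R) (rhoD R x) x := by
  rcases lt_trichotomy |x| R with h | h | h
  · -- interior of the quartic region
    have hev : rho R =ᶠ[nhds x] fun y =>
        3 / (8 * R ^ 5) * y ^ 4 - 5 / (4 * R ^ 3) * y ^ 2 + 15 / (8 * R) := by
      filter_upwards [continuous_abs.continuousAt.eventually_lt continuousAt_const h] with y hy
      exact rho_of_le hy.le
    rw [rhoD_of_le h.le]
    exact (hasDerivAt_quartic R x).congr_of_eventuallyEq hev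
  · -- gluing points
    rcases (abs_eq hR.le).1 h with h' | h'
    · -- x = R
      rw [h'] at *
      have hxa : |R| ≤ R := by rw [abs_of_pos hR]
      have hval : 3 / (2 * R ^ 5) * R ^ 3 - 5 / (2 * R ^ 3) * R = -(R ^ 2)⁻¹ := by
        field_simp; ring
      have left : HasDerivWithinAt (rho R) (-(R ^ 2)⁻¹) (Set.Iic R) R := by
        rw [← hval]
        apply (hasDerivAt_quartic R R).hasDerivWithinAt.congr_of_eventuallyEq
        · filter_upwards [eventually_mem_nhdsWithin,
            nhdsWithin_le_nhds (Ioi_mem_nhds hR)] with y hy1 hy2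
          exact rho_of_le (by rw [abs_of_pos hy2]; exact hy1)
        · exact rho_of_le hxa
      have right : HasDerivWithinAt (rho R) (-(R ^ 2)⁻¹) (Set.Ici R) R := by
        apply (hasDerivAt_inv hR.ne').hasDerivWithinAt.congr
        · intro y hy
          have hy0 : 0 < y := hR.trans_le hy
          by_cases hc : |y| ≤ R
          · have hyR : y = R := le_antisymm (by rwa [abs_of_pos hy0] at hc) hy
            rw [rho_of_le hc, hyR]
            field_simp; ring
          · rw [rho_of_not hc, abs_of_pos hy0, one_div]
        · rw [rho_of_le hxa]; field_simp; ring
      have hu := left.union right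
      rw [Set.Iic_union_Ici, hasDerivWithinAt_univ] at hu
      rw [rhoD_of_le hxa, hval]
      exact hu
    · -- x = -R
      rw [h'] at *
      have hxa : |(-R)| ≤ R := by rw [abs_neg, abs_of_pos hR]
      have hval : 3 / (2 * R ^ 5) * (-R) ^ 3 - 5 / (2 * R ^ 3) * (-R) = (R ^ 2)⁻¹ := by
        field_simp; ring
      have hne : (-R : ℝ) ≠ 0 := by simp [hR.ne']
      have left : HasDerivWithinAt (rho R) ((R ^ 2)⁻¹) (Set.Iic (-R)) (-R) := by
        have hD : HasDerivAt (fun y : ℝ => -y⁻¹) ((R ^ 2)⁻¹) (-R) := by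
          have := (hasDerivAt_inv hne).neg
          exact this.congr_deriv (by rw [neg_neg, neg_sq])
        apply hD.hasDerivWithinAt.congr
        · intro y hy
          have hy0 : y < 0 := lt_of_le_of_lt hy (by linarith)
          by_cases hc : |y| ≤ R
          · have hyR : y = -R := le_antisymm hy (neg_le_of_abs_le hc)
            rw [rho_of_le hc, hyR]
            field_simp; ring
          · rw [rho_of_not hc, abs_of_neg hy0, div_neg, one_div]
        · rw [rho_of_le hxa]; field_simp; ring
      have right : HasDerivWithinAt (rho R) ((R ^ 2)⁻¹) (Set.Ici (-R)) (-R) := by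
        rw [← hval]
        apply (hasDerivAt_quartic R (-R)).hasDerivWithinAt.congr_of_eventuallyEq
        · filter_upwards [eventually_mem_nhdsWithin,
            nhdsWithin_le_nhds (Iio_mem_nhds (show -R < R by linarith))] with y hy1 hy2
          exact rho_of_le (abs_le.2 ⟨hy1, hy2.le⟩)
        · exact rho_of_le hxa
      have hu := left.union right
      rw [Set.Iic_union_Ici, hasDerivWithinAt_univ] at hu
      rw [rhoD_of_le hxa, hval]
      exact hu
  · -- outer region
    have hnx : ¬ |x| ≤ R := not_le.2 h
    rcases lt_abs.1 h with h1 | h1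
    · -- R < x
      have hx0 : 0 < x := hR.trans h1
      have hev : rho R =ᶠ[nhds x] fun y => y⁻¹ := by
        filter_upwards [Ioi_mem_nhds h1] with y hy
        have hy0 : 0 < y := hR.trans hy
        rw [rho_of_not (by rw [abs_of_pos hy0]; exact not_le.2 hy), abs_of_pos hy0, one_div]
      have hd := (hasDerivAt_inv hx0.ne').congr_of_eventuallyEq hev
      have : rhoD R x = -(x ^ 2)⁻¹ := by
        rw [rhoD_of_not hnx, abs_of_pos hx0]
        field_simp
      rw [this]
      exact hd
    · -- x < -R
      have hx0 : x < 0 := by linarith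
      have hev : rho R =ᶠ[nhds x] fun y => -y⁻¹ := by
        filter_upwards [Iio_mem_nhds (show x < -R by linarith)] with y hy
        have hy' : y < -R := hy
        have hy0 : y < 0 := by linarith
        rw [rho_of_not (by rw [abs_of_neg hy0]; linarith), abs_of_neg hy0, div_neg, one_div]
      have hd := ((hasDerivAt_inv hx0.ne).neg).congr_of_eventuallyEq hev
      have : rhoD R x = (x ^ 2)⁻¹ := by
        rw [rhoD_of_not hnx, abs_of_neg hx0]
        field_simp [hx0.ne]
      rw [this]
      simpa using hd

lemma hasDerivAt_rhoD (R : ℝ) (hR : 0 < R) (x : ℝ) :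
    HasDerivAt (rhoD R) (rhoDD R x) x := by
  rcases lt_trichotomy |x| R with h | h | h
  · -- interior of the quartic region
    have hev : rhoD R =ᶠ[nhds x] fun y =>
        3 / (2 * R ^ 5) * y ^ 3 - 5 / (2 * R ^ 3) * y := by
      filter_upwards [continuous_abs.continuousAt.eventually_lt continuousAt_const h] with y hy
      exact rhoD_of_le hy.le
    rw [rhoDD_of_le h.le]
    exact (hasDerivAt_cubic R x).congr_of_eventuallyEq hev
  · -- gluing points
    rcases (abs_eq hR.le).1 h with h' | h'
    · -- x = R
      rw [h'] at *
      have hxa : |R| ≤ R := by rw [abs_of_pos hR]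
      have hval : 9 / (2 * R ^ 5) * R ^ 2 - 5 / (2 * R ^ 3) = 2 / R ^ 3 := by
        field_simp; ring
      have left : HasDerivWithinAt (rhoD R) (2 / R ^ 3) (Set.Iic R) R := by
        rw [← hval]
        apply (hasDerivAt_cubic R R).hasDerivWithinAt.congr_of_eventuallyEq
        · filter_upwards [eventually_mem_nhdsWithin,
            nhdsWithin_le_nhds (Ioi_mem_nhds hR)] with y hy1 hy2
          exact rhoD_of_le (by rw [abs_of_pos hy2]; exact hy1)
        · exact rhoD_of_le hxa
      have right : HasDerivWithinAt (rhoD R) (2 / R ^ 3) (Set.Ici R) R := by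
        have hD : HasDerivAt (fun y : ℝ => -(y ^ 2)⁻¹) (2 / R ^ 3) R := by
          have := ((hasDerivAt_pow 2 R).inv (pow_ne_zero 2 hR.ne')).neg
          refine this.congr_deriv ?_
          push_cast; field_simp
        apply hD.hasDerivWithinAt.congr
        · intro y hy
          have hy0 : 0 < y := hR.trans_le hy
          by_cases hc : |y| ≤ R
          · have hyR : y = R := le_antisymm (by rwa [abs_of_pos hy0] at hc) hy
            rw [rhoD_of_le hc, hyR]
            field_simp; ring
          · rw [rhoD_of_not hc, abs_of_pos hy0]
            field_simp
        · rw [rhoD_of_le hxa]; field_simp; ring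
      have hu := left.union right
      rw [Set.Iic_union_Ici, hasDerivWithinAt_univ] at hu
      rw [rhoDD_of_le hxa, hval]
      exact hu
    · -- x = -R
      rw [h'] at *
      have hxa : |(-R)| ≤ R := by rw [abs_neg, abs_of_pos hR]
      have hne : (-R : ℝ) ≠ 0 := by simp [hR.ne']
      have hval : 9 / (2 * R ^ 5) * (-R) ^ 2 - 5 / (2 * R ^ 3) = 2 / R ^ 3 := by
        field_simp; ring
      have left : HasDerivWithinAt (rhoD R) (2 / R ^ 3) (Set.Iic (-R)) (-R) := by
        have hD : HasDerivAt (fun y : ℝ => (y ^ 2)⁻¹) (2 / R ^ 3) (-R) := by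
          have := (hasDerivAt_pow 2 (-R)).inv (pow_ne_zero 2 hne)
          refine this.congr_deriv ?_
          push_cast; field_simp
        apply hD.hasDerivWithinAt.congr
        · intro y hy
          have hy0 : y < 0 := lt_of_le_of_lt hy (by linarith)
          by_cases hc : |y| ≤ R
          · have hyR : y = -R := le_antisymm hy (neg_le_of_abs_le hc)
            rw [rhoD_of_le hc, hyR]
            field_simp; ring
          · rw [rhoD_of_not hc, abs_of_neg hy0]
            field_simp [hy0.ne]
        · rw [rhoD_of_le hxa]; field_simp; ring
      have right : HasDerivWithinAt (rhoD R) (2 / R ^ 3) (Set.Ici (-R)) (-R) := by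
        rw [← hval]
        apply (hasDerivAt_cubic R (-R)).hasDerivWithinAt.congr_of_eventuallyEq
        · filter_upwards [eventually_mem_nhdsWithin,
            nhdsWithin_le_nhds (Iio_mem_nhds (show -R < R by linarith))] with y hy1 hy2
          exact rhoD_of_le (abs_le.2 ⟨hy1, hy2.le⟩)
        · exact rhoD_of_le hxa
      have hu := left.union right
      rw [Set.Iic_union_Ici, hasDerivWithinAt_univ] at hu
      rw [rhoDD_of_le hxa, hval]
      exact hu
  · -- outer region
    have hnx : ¬ |x| ≤ R := not_le.2 h
    rcases lt_abs.1 h with h1 | h1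
    · -- R < x
      have hx0 : 0 < x := hR.trans h1
      have hev : rhoD R =ᶠ[nhds x] fun y => -(y ^ 2)⁻¹ := by
        filter_upwards [Ioi_mem_nhds h1] with y hy
        have hy0 : 0 < y := hR.trans hy
        rw [rhoD_of_not (by rw [abs_of_pos hy0]; exact not_le.2 hy), abs_of_pos hy0]
        field_simp
      have hd := (((hasDerivAt_pow 2 x).inv (pow_ne_zero 2 hx0.ne')).neg).congr_of_eventuallyEq hev
      have : rhoDD R x = -(-(↑2 * x ^ (2 - 1)) / (x ^ 2) ^ 2) := by
        rw [rhoDD_of_not hnx, abs_of_pos hx0]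
        push_cast; field_simp
      rw [this]
      exact hd
    · -- x < -R
      have hx0 : x < 0 := by linarith
      have hev : rhoD R =ᶠ[nhds x] fun y => (y ^ 2)⁻¹ := by
        filter_upwards [Iio_mem_nhds (show x < -R by linarith)] with y hy
        have hy' : y < -R := hy
        have hy0 : y < 0 := by linarith
        rw [rhoD_of_not (by rw [abs_of_neg hy0]; linarith), abs_of_neg hy0]
        field_simp [hy0.ne]
      have hd := ((hasDerivAt_pow 2 x).inv (pow_ne_zero 2 hx0.ne)).congr_of_eventuallyEq hev
      have : rhoDD R x = -(↑2 * x ^ (2 - 1)) / (x ^ 2) ^ 2 := by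
        rw [rhoDD_of_not hnx, abs_of_neg hx0]
        push_cast; field_simp [hx0.ne]
      rw [this]
      exact hd


set_option maxHeartbeats 1000000 in
/-- For `R₀ ≥ 100`, both sectional curvature quantities `−ρ″/ρ` and `(1 − ρ′²)/ρ²` of the
warped product metric `dr² + ρ(r)² ds₂²` are bounded below by `−2/R₀²`. -/
theorem rho_sectional_curvature_lower_bound (R₀ : ℝ) (hR₀ : 100 ≤ R₀) :
    ∀ x : ℝ,
      -2 / R₀ ^ 2 ≤ -(deriv (deriv (rho R₀)) x) / rho R₀ x ∧
      -2 / R₀ ^ 2 ≤ (1 - (deriv (rho R₀) x) ^ 2) / (rho R₀ x) ^ 2 := by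
  intro x
  have hR : (0:ℝ) < R₀ := by linarith
  have hd1 : deriv (rho R₀) = rhoD R₀ := funext fun y => (hasDerivAt_rho R₀ hR y).deriv
  have hd2 : deriv (deriv (rho R₀)) x = rhoDD R₀ x := by
    rw [hd1]; exact (hasDerivAt_rhoD R₀ hR x).deriv
  rw [hd2, hd1]
  have hneg : -2 / R₀ ^ 2 ≤ 0 := div_nonpos_of_nonpos_of_nonneg (by norm_num) (by positivity)
  by_cases hx : |x| ≤ R₀
  · -- quartic region
    rw [rho_of_le hx, rhoD_of_le hx, rhoDD_of_le hx]
    have hx2 : x ^ 2 ≤ R₀ ^ 2 := by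
      have := abs_le.1 hx; nlinarith
    set P := 3 / (8 * R₀ ^ 5) * x ^ 4 - 5 / (4 * R₀ ^ 3) * x ^ 2 + 15 / (8 * R₀) with hP_def
    set Q := 9 / (2 * R₀ ^ 5) * x ^ 2 - 5 / (2 * R₀ ^ 3) with hQ_def
    set D := 3 / (2 * R₀ ^ 5) * x ^ 3 - 5 / (2 * R₀ ^ 3) * x with hD_def
    have key : 0 ≤ (R₀ ^ 2 - x ^ 2) * (7 * R₀ ^ 2 - 3 * x ^ 2) :=
      mul_nonneg (by linarith) (by nlinarith)
    have hPexp : P - 1 / R₀ = (R₀ ^ 2 - x ^ 2) * (7 * R₀ ^ 2 - 3 * x ^ 2) / (8 * R₀ ^ 5) := by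
      rw [hP_def]; field_simp; ring
    have hP : 1 / R₀ ≤ P := by
      have h8 : (0:ℝ) < 8 * R₀ ^ 5 := by positivity
      have := div_nonneg key h8.le
      linarith [hPexp ▸ this]
    have hPpos : 0 < P := lt_of_lt_of_le (by positivity) hP
    have hQexp : 2 / R₀ ^ 3 - Q = 9 * (R₀ ^ 2 - x ^ 2) / (2 * R₀ ^ 5) := by
      rw [hQ_def]; field_simp; ring
    have hQ : Q ≤ 2 / R₀ ^ 3 := by
      have h2 : (0:ℝ) < 2 * R₀ ^ 5 := by positivity
      have : 0 ≤ 9 * (R₀ ^ 2 - x ^ 2) / (2 * R₀ ^ 5) :=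
        div_nonneg (by linarith) h2.le
      linarith [hQexp ▸ this]
    constructor
    · rw [div_le_div_iff₀ (by positivity) hPpos]
      have hkey2 : -Q * R₀ ^ 2 - (-2 * P) =
          (R₀ ^ 2 - x ^ 2) * (25 * R₀ ^ 2 - 3 * x ^ 2) / (4 * R₀ ^ 5) := by
        rw [hP_def, hQ_def]; field_simp; ring
      have hpos2 : 0 ≤ (R₀ ^ 2 - x ^ 2) * (25 * R₀ ^ 2 - 3 * x ^ 2) / (4 * R₀ ^ 5) :=
        div_nonneg (mul_nonneg (by linarith) (by nlinarith)) (by positivity)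
      linarith [hkey2 ▸ hpos2]
    · -- 1 - D^2 ≥ 0
      have hDexp : D ^ 2 = x ^ 2 * (3 * x ^ 2 - 5 * R₀ ^ 2) ^ 2 / (4 * R₀ ^ 10) := by
        rw [hD_def]; field_simp; ring
      have hb : (3 * x ^ 2 - 5 * R₀ ^ 2) ^ 2 ≤ 25 * R₀ ^ 4 := by nlinarith [sq_nonneg x]
      have hnum : x ^ 2 * (3 * x ^ 2 - 5 * R₀ ^ 2) ^ 2 ≤ 4 * R₀ ^ 10 := by
        have h1 : x ^ 2 * (3 * x ^ 2 - 5 * R₀ ^ 2) ^ 2 ≤ R₀ ^ 2 * (25 * R₀ ^ 4) :=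
          mul_le_mul hx2 hb (sq_nonneg _) (by positivity)
        have h100 : (100:ℝ) ^ 4 ≤ R₀ ^ 4 := pow_le_pow_left₀ (by norm_num) hR₀ 4
        nlinarith [pow_pos hR 6]
      have hD2 : D ^ 2 ≤ 1 := by
        rw [hDexp, div_le_one (by positivity)]
        linarith
      have : (0:ℝ) ≤ (1 - D ^ 2) / P ^ 2 := div_nonneg (by linarith) (by positivity)
      linarith
  · -- outer region
    rw [rho_of_not hx, rhoD_of_not hx, rhoDD_of_not hx]
    push_neg at hx
    have ha0 : 0 < |x| := lt_trans hR hx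
    have hxne : x ≠ 0 := by intro h0; rw [h0, abs_zero] at ha0; exact lt_irrefl _ ha0
    have hane : |x| ≠ 0 := ha0.ne'
    constructor
    · have e : -(2 / |x| ^ 3) / (1 / |x|) = -2 / |x| ^ 2 := by
        field_simp
      rw [e, div_le_div_iff₀ (by positivity) (by positivity)]
      have h2 : R₀ ^ 2 ≤ |x| ^ 2 := pow_le_pow_left₀ hR.le hx.le 2
      nlinarith
    · have e : (-x / |x| ^ 3) ^ 2 = 1 / |x| ^ 4 := by
        rw [div_pow, neg_sq, ← sq_abs x]
        field_simp
      rw [e]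
      have h1 : 1 / |x| ^ 4 ≤ 1 := by
        rw [div_le_one (by positivity)]
        have : (1:ℝ) ≤ |x| := by linarith
        calc (1:ℝ) = 1^4 := by norm_num
        _ ≤ |x| ^ 4 := pow_le_pow_left₀ (by norm_num) this 4
      have : (0:ℝ) ≤ (1 - 1 / |x| ^ 4) / (1 / |x|) ^ 2 :=
        div_nonneg (by linarith) (by positivity)
      linarith
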